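/- Let F : T → T' be a triangle equivalence up to direct summands. Then Y ↦ F^{-1}(Y) is a lattice isomorphism from thick subcategories of T' to thick subcategories of T, it preserves and reflects primeness of thick subcategories, and the induced map Spec△(T') → Spec△(T), P ↦ F^{-1}(P), is a homeomorphism. -/

import Mathlib

open CategoryTheory Limits Pretriangulated

universe v u

variable (C : Type u) [Category.{v} C] [Preadditive C] [HasZeroObject C]
  [HasShift C ℤ] [∀ n : ℤ, (shiftFunctor C n).Additive] [Pretriangulated C]

/-- A thick subcategory of a (pre)triangulated category, modelled as a set of objects
closed under isomorphisms, zero objects, shifts, extensions and direct summands. -/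
structure ThickSubcat : Type (max u v) where
  set : Set C
  mem_of_iso : ∀ {X Y : C}, (X ≅ Y) → X ∈ set → Y ∈ set
  zero_mem : ∀ Z : C, IsZero Z → Z ∈ set
  shift_mem : ∀ (X : C) (n : ℤ), X ∈ set → X⟦n⟧ ∈ set
  ext_mem : ∀ T : Triangle C, T ∈ (distTriang C) → T.obj₁ ∈ set → T.obj₃ ∈ set → T.obj₂ ∈ set
  summand_mem : ∀ (X Y : C) (i : Y ⟶ X) (r : X ⟶ Y), i ≫ r = 𝟙 Y → X ∈ set → Y ∈ set

lemma ThickSubcat.set_injective : Function.Injective (ThickSubcat.set (C := C)) := by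
  rintro ⟨s, _, _, _, _, _⟩ ⟨t, _, _, _, _, _⟩ h
  cases h; rfl

instance : PartialOrder (ThickSubcat C) :=
  PartialOrder.lift ThickSubcat.set (ThickSubcat.set_injective C)

/-- A thick subcategory `P` is *prime* if there is a unique minimal element among the
thick subcategories properly containing `P`. -/
def IsPrimeThick (P : ThickSubcat C) : Prop :=
  ∃! X : ThickSubcat C, Minimal (fun Y : ThickSubcat C => P < Y) X

/-- The spectrum: the set of prime thick subcategories. -/
def SpecTri := {P : ThickSubcat C // IsPrimeThick C P}

/-- The support of an object `M`. -/
def suppObj (M : C) : Set (SpecTri C) := {P | M ∉ P.1.set}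

/-- The topology on the spectrum, with closed basis the supports `suppObj M`. -/
instance : TopologicalSpace (SpecTri C) :=
  TopologicalSpace.generateFrom {U | ∃ M : C, U = (suppObj C M)ᶜ}


open ZeroObject

section ConeSplit
variable {D : Type*} [Category D] [Preadditive D] [HasZeroObject D]
  [HasShift D ℤ] [∀ n : ℤ, (shiftFunctor D n).Additive] [Pretriangulated D]

lemma cone_split {X Z : D} (M' : D) (i : M' ⟶ X) (r : X ⟶ M') (hir : i ≫ r = 𝟙 M')
    (g : X ⟶ Z) (hc : Z ⟶ X⟦(1:ℤ)⟧)
    (hT : Triangle.mk (𝟙 X - r ≫ i) g hc ∈ distTriang D) :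
    Nonempty (Z ≅ M' ⊞ (M'⟦(1:ℤ)⟧)) := by
  have hiw : i ≫ (𝟙 X - r ≫ i) = 0 := by
    rw [Preadditive.comp_sub, Category.comp_id, ← Category.assoc, hir, Category.id_comp,
      sub_self]
  have hwr : (𝟙 X - r ≫ i) ≫ r = 0 := by
    rw [Preadditive.sub_comp, Category.id_comp, Category.assoc, hir, Category.comp_id,
      sub_self]
  obtain ⟨π₁, hπ₁⟩ : ∃ π₁ : Z ⟶ M', r = g ≫ π₁ := by
    obtain ⟨π₁, h⟩ := Triangle.yoneda_exact₂ _ hT r hwr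
    exact ⟨π₁, h⟩
  obtain ⟨s, hs⟩ : ∃ s : M'⟦(1:ℤ)⟧ ⟶ Z, i⟦(1:ℤ)⟧' = s ≫ hc := by
    obtain ⟨s, h⟩ := Triangle.coyoneda_exact₁ _ hT (i⟦(1:ℤ)⟧')
      (by change i⟦(1:ℤ)⟧' ≫ (𝟙 X - r ≫ i)⟦(1:ℤ)⟧' = 0; rw [← Functor.map_comp, hiw, Functor.map_zero])
    exact ⟨s, h⟩
  have hgc : g ≫ hc = 0 := comp_distTriang_mor_zero₂₃ _ hT
  have hri : (r ≫ i) ≫ g = g := by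
    have h : (𝟙 X - r ≫ i) ≫ g = 0 := comp_distTriang_mor_zero₁₂ _ hT
    simp only [Triangle.mk_obj₁, Triangle.mk_obj₂, Triangle.mk_obj₃, Triangle.mk_mor₁,
      Triangle.mk_mor₂, Preadditive.sub_comp, Category.id_comp, sub_eq_zero] at h
    exact h.symm
  have hir3 : hc ≫ (r ≫ i)⟦(1:ℤ)⟧' = hc := by
    have h3 : hc ≫ (𝟙 X - r ≫ i)⟦(1:ℤ)⟧' = 0 := comp_distTriang_mor_zero₃₁ _ hT
    simp only [Triangle.mk_obj₁, Triangle.mk_obj₂, Triangle.mk_obj₃, Triangle.mk_mor₃,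
      Triangle.mk_mor₁, Functor.map_sub, CategoryTheory.Functor.map_id,
      Preadditive.comp_sub, Category.comp_id, sub_eq_zero] at h3
    exact h3.symm
  have huπ₁ : (i ≫ g) ≫ π₁ = 𝟙 M' := by rw [Category.assoc, ← hπ₁, hir]
  have huπ₂ : (i ≫ g) ≫ (hc ≫ r⟦(1:ℤ)⟧') = 0 := by
    rw [Category.assoc, ← Category.assoc g, hgc, zero_comp, comp_zero]
  have hsπ₂ : s ≫ (hc ≫ r⟦(1:ℤ)⟧') = 𝟙 _ := by
    rw [← Category.assoc, ← hs, ← Functor.map_comp, hir, CategoryTheory.Functor.map_id]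
  have hφψ : biprod.desc (i ≫ g) s ≫ biprod.lift π₁ (hc ≫ r⟦(1:ℤ)⟧') =
      𝟙 _ + biprod.snd ≫ (s ≫ π₁) ≫ biprod.inl := by
    ext
    · simpa using huπ₁
    · simpa using huπ₂
    · simp
    · simpa using hsπ₂
  have hiso1 : IsIso (biprod.desc (i ≫ g) s ≫ biprod.lift π₁ (hc ≫ r⟦(1:ℤ)⟧')) := by
    refine ⟨𝟙 _ - biprod.snd ≫ (s ≫ π₁) ≫ biprod.inl, ?_, ?_⟩ <;>
    · rw [hφψ]
      simp [Preadditive.add_comp, Preadditive.comp_add, Preadditive.comp_sub,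
        Preadditive.sub_comp]
  have hθ2 : g ≫ (biprod.lift π₁ (hc ≫ r⟦(1:ℤ)⟧') ≫ biprod.desc (i ≫ g) s) = g := by
    rw [biprod.lift_desc, Preadditive.comp_add]
    have h1 : g ≫ π₁ ≫ i ≫ g = g := by
      rw [← Category.assoc, ← hπ₁, ← Category.assoc]
      exact hri
    have h2 : g ≫ (hc ≫ r⟦(1:ℤ)⟧') ≫ s = 0 := by
      simp only [← Category.assoc]
      rw [hgc, zero_comp, zero_comp]
    rw [h1, h2, add_zero]
  have hθ3 : (biprod.lift π₁ (hc ≫ r⟦(1:ℤ)⟧') ≫ biprod.desc (i ≫ g) s) ≫ hc = hc := by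
    rw [biprod.lift_desc, Preadditive.add_comp]
    simp only [Category.assoc, hgc, comp_zero, zero_add]
    rw [← hs, ← Functor.map_comp]
    exact hir3
  have hiso2 : IsIso (biprod.lift π₁ (hc ≫ r⟦(1:ℤ)⟧') ≫ biprod.desc (i ≫ g) s) := by
    exact isIso₃_of_isIso₁₂
      ({ hom₁ := 𝟙 X, hom₂ := 𝟙 X,
         hom₃ := biprod.lift π₁ (hc ≫ r⟦(1:ℤ)⟧') ≫ biprod.desc (i ≫ g) s,
         comm₁ := (Category.comp_id _).trans (Category.id_comp _).symm,
         comm₂ := hθ2.trans (Category.id_comp g).symm,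
         comm₃ := ((congrArg (hc ≫ ·) (CategoryTheory.Functor.map_id _ _)).trans (Category.comp_id hc)).trans hθ3.symm } :
        Triangle.mk (𝟙 X - r ≫ i) g hc ⟶ Triangle.mk (𝟙 X - r ≫ i) g hc)
      hT hT (IsIso.id X) (IsIso.id X)
  haveI := hiso1
  haveI := hiso2
  haveI : Epi (biprod.lift π₁ (hc ≫ r⟦(1:ℤ)⟧')) := epi_of_epi (biprod.desc (i ≫ g) s) _
  haveI : IsSplitMono (biprod.lift π₁ (hc ≫ r⟦(1:ℤ)⟧')) := IsSplitMono.mk'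
    ⟨biprod.desc (i ≫ g) s ≫
        inv (biprod.lift π₁ (hc ≫ r⟦(1:ℤ)⟧') ≫ biprod.desc (i ≫ g) s), by
      rw [← Category.assoc, IsIso.hom_inv_id]⟩
  haveI : IsIso (biprod.lift π₁ (hc ≫ r⟦(1:ℤ)⟧')) := isIso_of_epi_of_isSplitMono _
  exact ⟨asIso (biprod.lift π₁ (hc ≫ r⟦(1:ℤ)⟧'))⟩

end ConeSplit

section Helpers
variable {E : Type*} [Category E] [Preadditive E] [HasZeroObject E]
  [HasShift E ℤ] [∀ n : ℤ, (shiftFunctor E n).Additive] [Pretriangulated E]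

lemma ThickSubcat.mem_iff_of_iso (S : ThickSubcat E) {X Y : E} (e : X ≅ Y) :
    X ∈ S.set ↔ Y ∈ S.set := ⟨S.mem_of_iso e, S.mem_of_iso e.symm⟩

lemma ThickSubcat.cone_mem (S : ThickSubcat E) (T : Triangle E) (hT : T ∈ distTriang E)
    (h1 : T.obj₁ ∈ S.set) (h2 : T.obj₂ ∈ S.set) : T.obj₃ ∈ S.set :=
  S.ext_mem T.rotate (rot_of_distTriang T hT) h2 (S.shift_mem _ 1 h1)

lemma ThickSubcat.sum_mem (S : ThickSubcat E) (M : E) (h : M ∈ S.set) :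
    (M ⊞ M⟦(1:ℤ)⟧) ∈ S.set :=
  S.ext_mem (binaryBiproductTriangle M (M⟦(1:ℤ)⟧)) (binaryBiproductTriangle_distinguished _ _)
    h (S.shift_mem _ 1 h)

lemma ThickSubcat.mem_of_sum (S : ThickSubcat E) (M : E) (h : (M ⊞ M⟦(1:ℤ)⟧) ∈ S.set) :
    M ∈ S.set :=
  S.summand_mem _ _ biprod.inl biprod.fst biprod.inl_fst h

noncomputable def biprodPiIso (f : Bool → E) : (f true) ⊞ (f false) ≅ ∏ᶜ f := by
  refine ⟨Pi.lift (fun b => Bool.rec biprod.snd biprod.fst b),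
    biprod.lift (Pi.π f true) (Pi.π f false), ?_, ?_⟩
  · apply biprod.hom_ext <;> simp
  · apply limit.hom_ext; rintro ⟨b⟩; cases b <;> simp

end Helpers

section AuxMain
variable {C}
variable {D : Type*} [Category D] [Preadditive D] [HasZeroObject D]
  [HasShift D ℤ] [∀ n : ℤ, (shiftFunctor D n).Additive] [Pretriangulated D]
  (F : C ⥤ D) [F.CommShift ℤ] [F.IsTriangulated] [F.Additive] [F.Full] [F.Faithful]

lemma key_lemma (M : C) (M' : D) (i : M' ⟶ F.obj M) (r : F.obj M ⟶ M')
    (hir : i ≫ r = 𝟙 M') :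
    ∃ (N : C) (f : M ⟶ M) (g : M ⟶ N) (hc : N ⟶ M⟦(1:ℤ)⟧),
      (Triangle.mk f g hc ∈ distTriang C) ∧ Nonempty (F.obj N ≅ M' ⊞ (M'⟦(1:ℤ)⟧)) := by
  obtain ⟨N, g, hc, hdist⟩ := distinguished_cocone_triangle (𝟙 M - F.preimage (r ≫ i))
  refine ⟨N, _, g, hc, hdist, ?_⟩
  have hw : F.map (𝟙 M - F.preimage (r ≫ i)) = 𝟙 (F.obj M) - r ≫ i := by
    rw [F.map_sub, F.map_id, F.map_preimage]
  have hT : Triangle.mk (𝟙 (F.obj M) - r ≫ i) (F.map g)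
      (F.map hc ≫ (F.commShiftIso (1:ℤ)).hom.app M) ∈ distTriang D := by
    rw [← hw]
    exact F.map_distinguished _ hdist
  exact cone_split M' i r hir (F.map g) _ hT

lemma key_mem_iff (M' : D) (N : C) (e : F.obj N ≅ M' ⊞ (M'⟦(1:ℤ)⟧)) (Y : ThickSubcat D) :
    M' ∈ Y.set ↔ F.obj N ∈ Y.set :=
  ⟨fun h => Y.mem_of_iso e.symm (Y.sum_mem M' h),
   fun h => Y.mem_of_sum M' (Y.mem_of_iso e h)⟩

def preThick (Y : ThickSubcat D) : ThickSubcat C where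
  set := F.obj ⁻¹' Y.set
  mem_of_iso := fun e hX => Y.mem_of_iso (F.mapIso e) hX
  zero_mem := fun Z hZ => Y.zero_mem _ (F.map_isZero hZ)
  shift_mem := fun X n hX =>
    Y.mem_of_iso ((F.commShiftIso n).app X).symm (Y.shift_mem (F.obj X) n hX)
  ext_mem := fun T hT h1 h3 =>
    Y.ext_mem (F.mapTriangle.obj T) (F.map_distinguished T hT) h1 h3
  summand_mem := fun X X' i r hir hX => Y.summand_mem _ _ (F.map i) (F.map r)
    (by rw [← F.map_comp, hir, CategoryTheory.Functor.map_id]) hX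

def imThick (X : ThickSubcat C) : ThickSubcat D where
  set := {M' | ∃ M, M ∈ X.set ∧ ∃ (i : M' ⟶ F.obj M) (r : F.obj M ⟶ M'), i ≫ r = 𝟙 M'}
  mem_of_iso := by
    rintro A B e ⟨M, hM, i, r, hir⟩
    refine ⟨M, hM, e.inv ≫ i, r ≫ e.hom, ?_⟩
    rw [Category.assoc, ← Category.assoc i, hir, Category.id_comp, Iso.inv_hom_id]
  zero_mem := fun Z hZ => ⟨0, X.zero_mem 0 (isZero_zero C), 0, 0, hZ.eq_of_src _ _⟩
  shift_mem := by
    rintro A n ⟨M, hM, i, r, hir⟩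
    refine ⟨M⟦n⟧, X.shift_mem M n hM,
      i⟦n⟧' ≫ ((F.commShiftIso n).app M).inv, ((F.commShiftIso n).app M).hom ≫ r⟦n⟧', ?_⟩
    rw [Category.assoc, Iso.inv_hom_id_assoc, ← Functor.map_comp, hir,
      CategoryTheory.Functor.map_id]
  summand_mem := by
    rintro A B i r hir ⟨M, hM, i', r', h'⟩
    refine ⟨M, hM, i ≫ i', r' ≫ r, ?_⟩
    rw [Category.assoc, ← Category.assoc i', h', Category.id_comp, hir]
  ext_mem := by
    rintro T hT ⟨M₁, hM₁, i₁, r₁, hir₁⟩ ⟨M₃, hM₃, i₃, r₃, hir₃⟩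
    obtain ⟨N₁, f₁, g₁, c₁, hd₁, ⟨e₁⟩⟩ := key_lemma F M₁ T.obj₁ i₁ r₁ hir₁
    obtain ⟨N₃, f₃, g₃, c₃, hd₃, ⟨e₃⟩⟩ := key_lemma F M₃ T.obj₃ i₃ r₃ hir₃
    have hN₁ : N₁ ∈ X.set := X.cone_mem _ hd₁ hM₁ hM₁
    have hN₃ : N₃ ∈ X.set := X.cone_mem _ hd₃ hM₃ hM₃
    -- the product of T and its shift
    set K : Bool → Triangle D :=
      fun b => Bool.rec ((CategoryTheory.shiftFunctor (Triangle D) (1:ℤ)).obj T) T b with hK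
    have hKd : ∀ b, K b ∈ distTriang D := by
      rintro (_|_)
      · exact Triangle.shift_distinguished T hT 1
      · exact hT
    have hPT : productTriangle K ∈ distTriang D := productTriangle_distinguished K hKd
    let eP₁ : F.obj N₁ ≅ ∏ᶜ (fun j => (K j).obj₁) :=
      e₁ ≪≫ biprodPiIso (fun j => (K j).obj₁)
    let eP₃ : F.obj N₃ ≅ ∏ᶜ (fun j => (K j).obj₃) :=
      e₃ ≪≫ biprodPiIso (fun j => (K j).obj₃)
    -- transfer the product triangle
    set δ : F.obj N₃ ⟶ (F.obj N₁)⟦(1:ℤ)⟧ :=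
      eP₃.hom ≫ (productTriangle K).mor₃ ≫ (eP₁.inv)⟦(1:ℤ)⟧' with hδ
    have hSd : Triangle.mk (eP₁.hom ≫ (productTriangle K).mor₁)
        ((productTriangle K).mor₂ ≫ eP₃.inv) δ ∈ distTriang D := by
      refine isomorphic_distinguished _ hPT _ ?_
      refine Triangle.isoMk _ _ eP₁ (Iso.refl _) eP₃ ?_ ?_ ?_
      · simp
        exact Category.comp_id _
      · simp
        exact (Category.assoc _ _ _).trans ((congrArg _ eP₃.inv_hom_id).trans
          ((Category.comp_id _).trans (Category.id_comp _).symm))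
      · rw [hδ]; change (eP₃.hom ≫ (productTriangle K).mor₃ ≫ (eP₁.inv)⟦(1:ℤ)⟧') ≫
          eP₁.hom⟦(1:ℤ)⟧' = eP₃.hom ≫ (productTriangle K).mor₃
        exact (Category.assoc _ _ _).trans (congrArg (eP₃.hom ≫ ·) ((Category.assoc _ _ _).trans
          ((congrArg ((productTriangle K).mor₃ ≫ ·) ((Functor.map_comp _ _ _).symm.trans
            ((congrArg _ eP₁.inv_hom_id).trans (CategoryTheory.Functor.map_id _ _)))).trans
              (Category.comp_id _))))
    have hSd'' : (Triangle.mk (eP₁.hom ≫ (productTriangle K).mor₁)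
        ((productTriangle K).mor₂ ≫ eP₃.inv) δ).rotate.rotate ∈ distTriang D :=
      rot_of_distTriang _ (rot_of_distTriang _ hSd)
    obtain ⟨Z, u, v, hZd⟩ :=
      distinguished_cocone_triangle (F.preimage (δ ≫ ((F.commShiftIso (1:ℤ)).app N₁).inv))
    have hFZ : F.mapTriangle.obj
        (Triangle.mk (F.preimage (δ ≫ ((F.commShiftIso (1:ℤ)).app N₁).inv)) u v)
        ∈ distTriang D := F.map_distinguished _ hZd
    have hZmem : Z ∈ X.set := X.cone_mem _ hZd hN₃ (X.shift_mem N₁ 1 hN₁)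
    let I2 := isoTriangleOfIso₁₂ _ _ hSd'' hFZ (Iso.refl (F.obj N₃))
      ((F.commShiftIso (1:ℤ)).app N₁).symm (by
        change δ ≫ ((F.commShiftIso (1:ℤ)).app N₁).inv =
          𝟙 _ ≫ F.map (F.preimage (δ ≫ ((F.commShiftIso (1:ℤ)).app N₁).inv))
        rw [F.map_preimage]
        simp)
    have e2 : ((productTriangle K).obj₂)⟦(1:ℤ)⟧ ≅ F.obj Z := Triangle.π₃.mapIso I2
    have eB : (productTriangle K).obj₂ ≅ F.obj (Z⟦(-1:ℤ)⟧) :=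
      ((shiftFunctorCompIsoId D (1:ℤ) (-1:ℤ) (by ring)).app ((productTriangle K).obj₂)).symm
        ≪≫ (shiftFunctor D (-1:ℤ)).mapIso e2 ≪≫ ((F.commShiftIso (-1:ℤ)).app Z).symm
    refine ⟨Z⟦(-1:ℤ)⟧, X.shift_mem Z (-1) hZmem,
      Pi.lift (fun b => Bool.rec (motive := fun b => T.obj₂ ⟶ (K b).obj₂) 0 (𝟙 T.obj₂) b)
        ≫ eB.hom, eB.inv ≫ Pi.π (fun j => (K j).obj₂) true, ?_⟩
    refine (Category.assoc _ _ _).trans ((congrArg _ (eB.hom_inv_id_assoc _)).trans ?_)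
    simp

lemma preThick_imThick (X : ThickSubcat C) : preThick F (imThick F X) = X := by
  apply ThickSubcat.set_injective
  ext M
  constructor
  · rintro ⟨N, hN, i, r, hir⟩
    exact X.summand_mem N M (F.preimage i) (F.preimage r)
      (F.map_injective (by rw [F.map_comp, F.map_preimage, F.map_preimage, hir,
        CategoryTheory.Functor.map_id])) hN
  · intro hM
    exact ⟨M, hM, 𝟙 _, 𝟙 _, Category.id_comp _⟩

lemma imThick_preThick (hsummand : ∀ M' : D, ∃ (M : C) (i : M' ⟶ F.obj M)
      (r : F.obj M ⟶ M'), i ≫ r = 𝟙 M') (Y : ThickSubcat D) :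
    imThick F (preThick F Y) = Y := by
  apply ThickSubcat.set_injective
  ext M'
  constructor
  · rintro ⟨N, hN, i, r, hir⟩
    exact Y.summand_mem (F.obj N) M' i r hir hN
  · intro hM'
    obtain ⟨M, i, r, hir⟩ := hsummand M'
    obtain ⟨N, f, g, hc, hdist, ⟨e⟩⟩ := key_lemma F M M' i r hir
    have hFN : F.obj N ∈ Y.set := (key_mem_iff F M' N e Y).mp hM'
    exact ⟨N, hFN, biprod.inl ≫ e.inv, e.hom ≫ biprod.fst, by
      rw [Category.assoc, Iso.inv_hom_id_assoc, biprod.inl_fst]⟩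

lemma imThick_mono {X₁ X₂ : ThickSubcat C} (h : X₁ ≤ X₂) : imThick F X₁ ≤ imThick F X₂ := by
  rintro M' ⟨M, hM, i, r, hir⟩
  exact ⟨M, h hM, i, r, hir⟩

noncomputable def thickOrderIso (hsummand : ∀ M' : D, ∃ (M : C) (i : M' ⟶ F.obj M)
      (r : F.obj M ⟶ M'), i ≫ r = 𝟙 M') : ThickSubcat D ≃o ThickSubcat C where
  toFun := preThick F
  invFun := imThick F
  left_inv := imThick_preThick F hsummand
  right_inv := preThick_imThick F
  map_rel_iff' := by
    intro Y₁ Y₂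
    constructor
    · intro h
      rw [← imThick_preThick F hsummand Y₁, ← imThick_preThick F hsummand Y₂]
      exact imThick_mono F h
    · intro h M hM
      exact h hM


end AuxMain

section Order
variable {α β : Type*} [PartialOrder α] [PartialOrder β]

lemma minimal_map_orderIso (e : α ≃o β) (P X : α) :
    Minimal (fun Z => P < Z) X ↔ Minimal (fun Z => e P < Z) (e X) := by
  constructor
  · rintro ⟨h1, h2⟩
    refine ⟨e.lt_iff_lt.2 h1, ?_⟩
    intro y hy hle
    obtain ⟨z, rfl⟩ := e.surjective y
    rw [e.lt_iff_lt] at hy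
    rw [e.le_iff_le] at hle ⊢
    exact h2 hy hle
  · rintro ⟨h1, h2⟩
    refine ⟨e.lt_iff_lt.1 h1, ?_⟩
    intro y hy hle
    have := h2 (y := e y) (e.strictMono hy) (e.le_iff_le.2 hle)
    rwa [e.le_iff_le] at this

lemma existsUnique_minimal_map (e : α ≃o β) (P : α)
    (h : ∃! X, Minimal (fun Z => P < Z) X) :
    ∃! X, Minimal (fun Z => e P < Z) X := by
  obtain ⟨X, hX, hun⟩ := h
  refine ⟨e X, (minimal_map_orderIso e P X).1 hX, ?_⟩
  intro y hy
  obtain ⟨z, rfl⟩ := e.surjective y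
  exact congrArg e (hun z ((minimal_map_orderIso e P z).2 hy))

lemma existsUnique_minimal_iff (e : α ≃o β) (P : α) :
    (∃! X, Minimal (fun Z => P < Z) X) ↔ ∃! X, Minimal (fun Z => e P < Z) X := by
  refine ⟨existsUnique_minimal_map e P, fun h => ?_⟩
  have := existsUnique_minimal_map e.symm (e P) h
  simpa using this

end Order


/-- Let `F : T → T'` be a triangle equivalence up to direct summands. Then
`Y ↦ F⁻¹(Y)` is a lattice isomorphism from thick subcategories of `T'` to those of `T`,
it preserves and reflects primeness, and the induced map
`Spec△(T') → Spec△(T)`, `P ↦ F⁻¹(P)`, is a homeomorphism. -/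
theorem stmt11 (D : Type*) [Category D] [Preadditive D] [HasZeroObject D]
    [HasShift D ℤ] [∀ n : ℤ, (shiftFunctor D n).Additive] [Pretriangulated D]
    (F : C ⥤ D) [F.CommShift ℤ] [F.IsTriangulated] [F.Additive] [F.Full] [F.Faithful]
    (hsummand : ∀ M' : D, ∃ (M : C) (i : M' ⟶ F.obj M) (r : F.obj M ⟶ M'), i ≫ r = 𝟙 M') :
    ∃ e : ThickSubcat D ≃o ThickSubcat C,
      (∀ Y : ThickSubcat D, (e Y).set = F.obj ⁻¹' Y.set) ∧
      (∀ Y : ThickSubcat D, IsPrimeThick D Y ↔ IsPrimeThick C (e Y)) ∧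
      ∃ h : SpecTri D ≃ₜ SpecTri C,
        ∀ P : SpecTri D, ((h P).1 : ThickSubcat C).set = F.obj ⁻¹' P.1.set := by
  refine ⟨thickOrderIso F hsummand, fun Y => rfl, ?_, ?_⟩
  · intro Y
    exact existsUnique_minimal_iff (thickOrderIso F hsummand) Y
  · have hprime : ∀ Y : ThickSubcat D, IsPrimeThick D Y ↔
        IsPrimeThick C (thickOrderIso F hsummand Y) :=
      fun Y => existsUnique_minimal_iff (thickOrderIso F hsummand) Y
    set e := thickOrderIso F hsummand with he
    refine ⟨⟨⟨fun P => ⟨e P.1, (hprime P.1).mp P.2⟩,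
      fun Q => ⟨e.symm Q.1, (hprime (e.symm Q.1)).mpr (by
        rw [OrderIso.apply_symm_apply]; exact Q.2)⟩,
      fun P => Subtype.ext (by simp), fun Q => Subtype.ext (by simp)⟩, ?_, ?_⟩,
      fun P => rfl⟩
    · apply continuous_generateFrom_iff.mpr
      rintro s ⟨M, rfl⟩
      have hset : (fun (P : SpecTri D) => (⟨e P.1, (hprime P.1).mp P.2⟩ : SpecTri C))
          ⁻¹' (suppObj C M)ᶜ = (suppObj D (F.obj M))ᶜ := by
        ext P
        simp only [Set.mem_preimage, Set.mem_compl_iff]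
        exact Iff.rfl
      show IsOpen ((fun (P : SpecTri D) => (⟨e P.1, (hprime P.1).mp P.2⟩ : SpecTri C))
          ⁻¹' (suppObj C M)ᶜ)
      rw [hset]
      exact TopologicalSpace.isOpen_generateFrom_of_mem ⟨F.obj M, rfl⟩
    · apply continuous_generateFrom_iff.mpr
      rintro s ⟨M', rfl⟩
      obtain ⟨M, i, r, hir⟩ := hsummand M'
      obtain ⟨N, f, g0, hc, hdist, ⟨eiso⟩⟩ := key_lemma F M M' i r hir
      have hset : (fun (Q : SpecTri C) => (⟨e.symm Q.1, (hprime (e.symm Q.1)).mpr (by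
            rw [OrderIso.apply_symm_apply]; exact Q.2)⟩ : SpecTri D))
          ⁻¹' (suppObj D M')ᶜ = (suppObj C N)ᶜ := by
        ext Q
        simp only [Set.mem_preimage, Set.mem_compl_iff]
        refine Iff.trans (b := M' ∈ (e.symm Q.1).set) not_not ?_
        rw [key_mem_iff F M' N eiso (e.symm Q.1)]
        have h2 : e (e.symm Q.1) = Q.1 := OrderIso.apply_symm_apply e Q.1
        have h3 : F.obj N ∈ (e.symm Q.1).set ↔ N ∈ Q.1.set := by
          conv_rhs => rw [← h2]
          exact Iff.rfl
        exact h3.trans (Iff.symm not_not)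
      show IsOpen _
      refine (congrArg IsOpen hset).mpr ?_
      exact TopologicalSpace.isOpen_generateFrom_of_mem ⟨N, rfl⟩
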